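/- Let (B, p⊥, τ) be a static anisotropic (CGL) plasma equilibrium on ℝ³ with τ(x) < 1 for every x, let p := p⊥ + τ|B|²/2 be the mean pressure, let A := curl( √(1 − τ) B ), and let f : ℝ → ℝ be any smooth function. Then div( f(p) A ) = 0 everywhere on ℝ³. (This is conservation of the flux related to the vorticity of the vector field √(1 − τ) B.) -/

import Mathlib

open Matrix

noncomputable section

abbrev R3 : Type := Fin 3 → ℝ

/-- Partial derivative in the `i`-th coordinate direction. -/
def pd (i : Fin 3) (f : R3 → ℝ) (x : R3) : ℝ := fderiv ℝ f x (Pi.single i 1)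

/-- Gradient of a scalar field on ℝ³. -/
def grad3 (f : R3 → ℝ) (x : R3) : R3 := fun i => pd i f x

/-- Divergence of a vector field on ℝ³. -/
def div3 (B : R3 → R3) (x : R3) : ℝ := ∑ i, pd i (fun y => B y i) x

/-- Curl of a vector field on ℝ³. -/
def curl3 (B : R3 → R3) (x : R3) : R3 :=
  ![pd 1 (fun y => B y 2) x - pd 2 (fun y => B y 1) x,
    pd 2 (fun y => B y 0) x - pd 0 (fun y => B y 2) x,
    pd 0 (fun y => B y 1) x - pd 1 (fun y => B y 0) x]

lemma pd_add (i : Fin 3) {F G : R3 → ℝ} {x : R3} (hF : DifferentiableAt ℝ F x)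
    (hG : DifferentiableAt ℝ G x) :
    pd i (fun y => F y + G y) x = pd i F x + pd i G x := by
  simp [pd, fderiv_fun_add hF hG]

lemma pd_sub (i : Fin 3) {F G : R3 → ℝ} {x : R3} (hF : DifferentiableAt ℝ F x)
    (hG : DifferentiableAt ℝ G x) :
    pd i (fun y => F y - G y) x = pd i F x - pd i G x := by
  simp [pd, fderiv_fun_sub hF hG]

lemma pd_mul (i : Fin 3) {F G : R3 → ℝ} {x : R3} (hF : DifferentiableAt ℝ F x)
    (hG : DifferentiableAt ℝ G x) :
    pd i (fun y => F y * G y) x = pd i F x * G x + F x * pd i G x := by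
  simp only [pd, fderiv_fun_mul hF hG, ContinuousLinearMap.add_apply,
    ContinuousLinearMap.smul_apply, smul_eq_mul]
  ring

lemma smooth_diff {F : R3 → ℝ} (hF : ContDiff ℝ (⊤ : ℕ∞) F) : Differentiable ℝ F :=
  hF.differentiable (by simp)

lemma contDiff_pd (j : Fin 3) {F : R3 → ℝ} (hF : ContDiff ℝ (⊤ : ℕ∞) F) :
    ContDiff ℝ (⊤ : ℕ∞) (pd j F) := by
  have h1 : ContDiff ℝ ((⊤ : ℕ∞) : WithTop ℕ∞) (fderiv ℝ F) :=
    hF.fderiv_right (by exact_mod_cast le_top)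
  exact (ContinuousLinearMap.apply ℝ ℝ (Pi.single j 1)).contDiff.comp h1

lemma pd_comm {F : R3 → ℝ} (hF : ContDiff ℝ (⊤ : ℕ∞) F) (i j : Fin 3) (x : R3) :
    pd i (pd j F) x = pd j (pd i F) x := by
  have h0 : ContDiff ℝ ((⊤ : ℕ∞) : WithTop ℕ∞) (fderiv ℝ F) :=
    hF.fderiv_right (by exact_mod_cast le_top)
  have hd : DifferentiableAt ℝ (fderiv ℝ F) x := (h0.differentiable (by simp)) x
  have h1 : ∀ v : R3, fderiv ℝ (fun y => fderiv ℝ F y v) x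
      = (ContinuousLinearMap.apply ℝ ℝ v).comp (fderiv ℝ (fderiv ℝ F) x) := fun v =>
    (((ContinuousLinearMap.apply ℝ ℝ v).hasFDerivAt).comp x hd.hasFDerivAt).fderiv
  have hsymm := (hF.contDiffAt (x := x)).isSymmSndFDerivAt (n := ((⊤:ℕ∞) : WithTop ℕ∞))
    (by
      rw [minSmoothness_of_isRCLikeNormedField]
      rw [show ((2:WithTop ℕ∞)) = ((2:ℕ∞) : WithTop ℕ∞) from rfl]
      exact_mod_cast (le_top (a := (2:ℕ∞))))
  rw [show pd i (pd j F) x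
      = fderiv ℝ (fun y => fderiv ℝ F y (Pi.single j 1)) x (Pi.single i 1) from rfl,
    show pd j (pd i F) x
      = fderiv ℝ (fun y => fderiv ℝ F y (Pi.single i 1)) x (Pi.single j 1) from rfl,
    h1, h1]
  simp only [ContinuousLinearMap.comp_apply, ContinuousLinearMap.apply_apply]
  exact (hsymm _ _).symm

lemma pd_comp (i : Fin 3) {f : ℝ → ℝ} {P : R3 → ℝ} {x : R3}
    (hf : DifferentiableAt ℝ f (P x)) (hP : DifferentiableAt ℝ P x) :
    pd i (fun y => f (P y)) x = deriv f (P x) * pd i P x := by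
  have h := (hf.hasDerivAt.comp_hasFDerivAt x hP.hasFDerivAt).fderiv
  simp only [pd]
  rw [show (fun y => f (P y)) = f ∘ P from rfl, h]
  simp [smul_eq_mul]

lemma pd_sqrt (i : Fin 3) {τ : R3 → ℝ} {x : R3} (hτ : DifferentiableAt ℝ τ x)
    (h : 0 < 1 - τ x) :
    pd i τ x = -(pd i (fun y => Real.sqrt (1 - τ y)) x * (2 * Real.sqrt (1 - τ x))) := by
  have h1 : HasFDerivAt (fun y : R3 => 1 - τ y) (0 - fderiv ℝ τ x) x :=
    (hasFDerivAt_const 1 x).sub hτ.hasFDerivAt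
  have h2 := (Real.hasDerivAt_sqrt (ne_of_gt h)).comp_hasFDerivAt x h1
  have h3 : pd i (fun y => Real.sqrt (1 - τ y)) x
      = (1 / (2 * Real.sqrt (1 - τ x))) * (0 - pd i τ x) := by
    simp only [pd]
    rw [show (fun y : R3 => Real.sqrt (1 - τ y)) = (fun t => Real.sqrt t) ∘ (fun y => 1 - τ y)
      from rfl, h2.fderiv]
    simp [smul_eq_mul]
  rw [h3]
  have hs : Real.sqrt (1 - τ x) ≠ 0 := by positivity
  field_simp
  ring

/-- Conservation of the flux related to the vorticity of `√(1−τ) B` for static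
anisotropic (CGL) equilibria with `τ < 1`: with `A = curl(√(1−τ) B)` and `p = p⊥ + τ|B|²/2`,
`div(f(p) A) = 0` for any smooth `f`. -/
theorem cgl_vorticity_conservation
    (B : R3 → R3) (pperp τ : R3 → ℝ)
    (hB : ContDiff ℝ (⊤ : ℕ∞) B) (hpperp : ContDiff ℝ (⊤ : ℕ∞) pperp)
    (hτ : ContDiff ℝ (⊤ : ℕ∞) τ)
    (hτlt : ∀ x, τ x < 1)
    (hmom : ∀ x, (1 - τ x) • crossProduct (curl3 B x) (B x) =
      grad3 pperp x + τ x • grad3 (fun y => (B y ⬝ᵥ B y) / 2) x + (B x ⬝ᵥ grad3 τ x) • B x)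
    (hdiv : ∀ x, div3 B x = 0)
    (hstate : ∀ x, B x ⬝ᵥ grad3 τ x = 0)
    (p : R3 → ℝ) (hp : p = fun x => pperp x + τ x * (B x ⬝ᵥ B x) / 2)
    (A : R3 → R3) (hA : A = fun x => curl3 (fun y => Real.sqrt (1 - τ y) • B y) x)
    (f : ℝ → ℝ) (hf : ContDiff ℝ (⊤ : ℕ∞) f) :
    ∀ x, div3 (fun y => f (p y) • A y) x = 0 := by
  intro x
  have hpos : ∀ y, 0 < 1 - τ y := fun y => by linarith [hτlt y]
  have hBi : ∀ i, ContDiff ℝ (⊤:ℕ∞) (fun y => B y i) := fun i => contDiff_pi.mp hB i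
  set g : R3 → ℝ := fun y => Real.sqrt (1 - τ y) with hgdef
  have hgsm : ContDiff ℝ (⊤:ℕ∞) g := by
    rw [contDiff_iff_contDiffAt]
    intro y
    exact (Real.contDiffAt_sqrt (ne_of_gt (hpos y))).comp y ((contDiff_const.sub hτ).contDiffAt)
  have hVi : ∀ i, ContDiff ℝ (⊤:ℕ∞) (fun y => g y * B y i) := fun i => hgsm.mul (hBi i)
  have hQ : ContDiff ℝ (⊤:ℕ∞) (fun y => B y ⬝ᵥ B y) := by
    have hq : (fun y : R3 => B y ⬝ᵥ B y)
        = fun y => B y 0 * B y 0 + B y 1 * B y 1 + B y 2 * B y 2 := by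
      funext y; simp [dotProduct, Fin.sum_univ_three]
    rw [hq]
    exact (((hBi 0).mul (hBi 0)).add ((hBi 1).mul (hBi 1))).add ((hBi 2).mul (hBi 2))
  have hR : ContDiff ℝ (⊤:ℕ∞) (fun y => (B y ⬝ᵥ B y) / 2) := hQ.div_const 2
  have hpfun : p = fun y => pperp y + τ y * ((B y ⬝ᵥ B y) / 2) := by
    rw [hp]; funext y; ring
  have hpsm : ContDiff ℝ (⊤:ℕ∞) p := by
    rw [hpfun]; exact hpperp.add (hτ.mul hR)
  have hA' : A = fun z => curl3 (fun y => g y • B y) z := hA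
  -- A components as functions
  have hA0fun : (fun y => A y 0)
      = fun y => pd 1 (fun z => g z * B z 2) y - pd 2 (fun z => g z * B z 1) y := by
    funext y; rw [hA']; simp [curl3, Pi.smul_apply, smul_eq_mul]
  have hA1fun : (fun y => A y 1)
      = fun y => pd 2 (fun z => g z * B z 0) y - pd 0 (fun z => g z * B z 2) y := by
    funext y; rw [hA']; simp [curl3, Pi.smul_apply, smul_eq_mul]
  have hA2fun : (fun y => A y 2)
      = fun y => pd 0 (fun z => g z * B z 1) y - pd 1 (fun z => g z * B z 0) y := by
    funext y; rw [hA']; simp [curl3, Pi.smul_apply, smul_eq_mul]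
  -- differentiability facts
  have hdV : ∀ j k, DifferentiableAt ℝ (pd j (fun z => g z * B z k)) x :=
    fun j k => (smooth_diff (contDiff_pd j (hVi k))) x
  have hAd0 : DifferentiableAt ℝ (fun y => A y 0) x := by
    rw [hA0fun]; exact (hdV 1 2).sub (hdV 2 1)
  have hAd1 : DifferentiableAt ℝ (fun y => A y 1) x := by
    rw [hA1fun]; exact (hdV 2 0).sub (hdV 0 2)
  have hAd2 : DifferentiableAt ℝ (fun y => A y 2) x := by
    rw [hA2fun]; exact (hdV 0 1).sub (hdV 1 0)
  have hfd : Differentiable ℝ f := hf.differentiable (by simp)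
  have hpd : Differentiable ℝ p := smooth_diff hpsm
  have hfp : DifferentiableAt ℝ (fun y => f (p y)) x :=
    DifferentiableAt.comp x (hfd (p x)) (hpd x)
  have hτd : Differentiable ℝ τ := smooth_diff hτ
  have hgd : Differentiable ℝ g := smooth_diff hgsm
  have hBd : ∀ i, Differentiable ℝ (fun y => B y i) := fun i => smooth_diff (hBi i)
  have hRd : Differentiable ℝ (fun y => (B y ⬝ᵥ B y) / 2) := smooth_diff hR
  -- div of curl is zero
  have hdivA : pd 0 (fun y => A y 0) x + pd 1 (fun y => A y 1) x
      + pd 2 (fun y => A y 2) x = 0 := by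
    rw [hA0fun, hA1fun, hA2fun,
      pd_sub 0 (hdV 1 2) (hdV 2 1), pd_sub 1 (hdV 2 0) (hdV 0 2),
      pd_sub 2 (hdV 0 1) (hdV 1 0),
      pd_comm (hVi 2) 1 0 x, pd_comm (hVi 1) 2 0 x, pd_comm (hVi 0) 2 1 x]
    ring
  -- derivative of p via momentum equation
  have hpdp : ∀ i, pd i p x = (1 - τ x) * (crossProduct (curl3 B x) (B x)) i
      + pd i τ x * ((B x ⬝ᵥ B x) / 2) := by
    intro i
    have h1 : pd i p x = pd i pperp x
        + (pd i τ x * ((B x ⬝ᵥ B x) / 2) + τ x * pd i (fun y => (B y ⬝ᵥ B y) / 2) x) := by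
      rw [hpfun, pd_add i (G := fun y => τ y * ((B y ⬝ᵥ B y) / 2)) (smooth_diff hpperp x) ((hτd x).mul (hRd x)),
        pd_mul i (hτd x) (hRd x)]
    have hm := congrFun (hmom x) i
    simp only [Pi.add_apply, Pi.smul_apply, smul_eq_mul, grad3, hstate x, zero_mul,
      add_zero] at hm
    rw [h1]
    linear_combination -hm
  -- values of A at x
  have hAv0 : A x 0 = pd 1 g x * B x 2 + g x * pd 1 (fun z => B z 2) x
      - (pd 2 g x * B x 1 + g x * pd 2 (fun z => B z 1) x) := by
    rw [congrFun hA0fun x, pd_mul 1 (hgd x) (hBd 2 x), pd_mul 2 (hgd x) (hBd 1 x)]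
  have hAv1 : A x 1 = pd 2 g x * B x 0 + g x * pd 2 (fun z => B z 0) x
      - (pd 0 g x * B x 2 + g x * pd 0 (fun z => B z 2) x) := by
    rw [congrFun hA1fun x, pd_mul 2 (hgd x) (hBd 0 x), pd_mul 0 (hgd x) (hBd 2 x)]
  have hAv2 : A x 2 = pd 0 g x * B x 1 + g x * pd 0 (fun z => B z 1) x
      - (pd 1 g x * B x 0 + g x * pd 1 (fun z => B z 0) x) := by
    rw [congrFun hA2fun x, pd_mul 0 (hgd x) (hBd 1 x), pd_mul 1 (hgd x) (hBd 0 x)]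
  -- τ derivative in terms of g derivative
  have ht : ∀ i, pd i τ x = -(pd i g x * (2 * g x)) := by
    intro i
    rw [hgdef]
    exact pd_sqrt i (hτd x) (hpos x)
  have hg2 : g x * g x = 1 - τ x := by
    rw [hgdef]; exact Real.mul_self_sqrt (le_of_lt (hpos x))
  have hgne : g x ≠ 0 := by
    rw [hgdef]; exact ne_of_gt (Real.sqrt_pos.mpr (hpos x))
  -- B ⟂ grad g
  have hbu : B x 0 * pd 0 g x + B x 1 * pd 1 g x + B x 2 * pd 2 g x = 0 := by
    have h := hstate x
    simp only [dotProduct, grad3, Fin.sum_univ_three] at h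
    rw [ht 0, ht 1, ht 2] at h
    have h2 : (2 * g x) * (B x 0 * pd 0 g x + B x 1 * pd 1 g x + B x 2 * pd 2 g x) = 0 := by
      linear_combination -h
    rcases mul_eq_zero.mp h2 with h3 | h3
    · exact absurd h3 (by positivity)
    · exact h3
  -- the key orthogonality: grad p · A = 0
  have hS1 : pd 0 p x * A x 0 + pd 1 p x * A x 1 + pd 2 p x * A x 2 = 0 := by
    rw [hpdp 0, hpdp 1, hpdp 2, hAv0, hAv1, hAv2, ht 0, ht 1, ht 2]
    simp only [crossProduct, curl3, dotProduct, Fin.sum_univ_three, LinearMap.mk₂_apply,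
      Matrix.cons_val_zero, Matrix.cons_val_one, Matrix.head_cons, Matrix.cons_val_two,
      Matrix.tail_cons]
    linear_combination
      (-(g x * g x) * ((pd 1 (fun z => B z 2) x - pd 2 (fun z => B z 1) x) * B x 0
        + (pd 2 (fun z => B z 0) x - pd 0 (fun z => B z 2) x) * B x 1
        + (pd 0 (fun z => B z 1) x - pd 1 (fun z => B z 0) x) * B x 2)) * hbu
      + (-((B x 0 * B x 0 + B x 1 * B x 1 + B x 2 * B x 2)
            * ((pd 1 (fun z => B z 2) x - pd 2 (fun z => B z 1) x) * pd 0 g x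
              + (pd 2 (fun z => B z 0) x - pd 0 (fun z => B z 2) x) * pd 1 g x
              + (pd 0 (fun z => B z 1) x - pd 1 (fun z => B z 0) x) * pd 2 g x)
          - ((pd 1 (fun z => B z 2) x - pd 2 (fun z => B z 1) x) * B x 0
              + (pd 2 (fun z => B z 0) x - pd 0 (fun z => B z 2) x) * B x 1
              + (pd 0 (fun z => B z 1) x - pd 1 (fun z => B z 0) x) * B x 2)
            * (B x 0 * pd 0 g x + B x 1 * pd 1 g x + B x 2 * pd 2 g x))) * hg2
  -- the final computation
  rw [show div3 (fun y => f (p y) • A y) x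
      = ∑ i, pd i (fun y => (f (p y) • A y) i) x from rfl]
  simp only [Fin.sum_univ_three, Pi.smul_apply, smul_eq_mul]
  rw [pd_mul 0 hfp hAd0, pd_mul 1 hfp hAd1, pd_mul 2 hfp hAd2,
    pd_comp 0 (hfd (p x)) (hpd x), pd_comp 1 (hfd (p x)) (hpd x),
    pd_comp 2 (hfd (p x)) (hpd x)]
  linear_combination deriv f (p x) * hS1 + f (p x) * hdivA
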